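/- Let G be an invertible p×p real matrix, R a p×p orthogonal matrix, and L = {Rᵀ Gᵀ f : f ∈ ℤ^p}. Suppose that for every nonzero f ∈ ℤ^p and every j ∈ {1, …, p}, (Rᵀ Gᵀ f)_j ≠ 0 (i.e., each one-dimensional coordinate projection is injective on L). Let n ≥ 1 be an integer and l > 0 satisfy l^p = n·|det(G)|. Then there exists δ in the Voronoi cell of the origin with respect to L such that the set {x ∈ L : x + δ ∈ [−l/2, l/2]^p} has exactly n elements. -/

import Mathlib

open Matrix MeasureTheory Pointwise


section OneD
variable {α : Type*} [DecidableEq α]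

private noncomputable def gcount (T : Finset α) (u : α → ℝ) (l t : ℝ) : ℕ :=
  (T.filter (fun f => u f ≤ t ∧ t ≤ u f + l)).card

private lemma card_filter_le_one' (T : Finset α) (w : α → ℝ) (c : ℝ)
    (hinj : Function.Injective w) : (T.filter (fun f => w f = c)).card ≤ 1 := by
  classical
  refine Finset.card_le_one.mpr ?_
  intro x hx y hy
  simp only [Finset.mem_filter] at hx hy
  exact hinj (hx.2.trans hy.2.symm)

private lemma trans1 (T : Finset α) (u : α → ℝ) (l : ℝ)
    (hu : Function.Injective u) {a b : ℝ} (hab : a ≤ b)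
    (hJ : ∀ f ∈ T, u f ∉ Set.Ioc a b ∧ u f + l ∉ Set.Ioc a b) :
    gcount T u l b ≤ gcount T u l a ∧ gcount T u l a ≤ gcount T u l b + 1 := by
  unfold gcount
  constructor
  · apply Finset.card_le_card
    intro f hf
    simp only [Finset.mem_filter] at hf ⊢
    obtain ⟨hT, h1, h2⟩ := hf
    refine ⟨hT, ?_, le_trans hab h2⟩
    by_contra hlt
    exact (hJ f hT).1 ⟨lt_of_not_ge hlt, h1⟩
  · have hsub : T.filter (fun f => u f ≤ a ∧ a ≤ u f + l) ⊆
        (T.filter (fun f => u f ≤ b ∧ b ≤ u f + l)) ∪ (T.filter (fun f => u f + l = a)) := by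
      intro f hf
      simp only [Finset.mem_filter, Finset.mem_union] at hf ⊢
      obtain ⟨hT, h1, h2⟩ := hf
      by_cases hb : b ≤ u f + l
      · exact Or.inl ⟨hT, le_trans h1 hab, hb⟩
      · rcases eq_or_lt_of_le h2 with he | he
        · exact Or.inr ⟨hT, he.symm⟩
        · exact absurd ⟨he, le_of_lt (lt_of_not_ge hb)⟩ (hJ f hT).2
    have h1 : (T.filter (fun f => u f + l = a)).card ≤ 1 :=
      card_filter_le_one' T (fun f => u f + l) a
        (fun x y h => hu (by dsimp at h; linarith))
    have h2 := Finset.card_le_card hsub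
    have h3 := Finset.card_union_le (T.filter (fun f => u f ≤ b ∧ b ≤ u f + l))
      (T.filter (fun f => u f + l = a))
    omega

private lemma trans2 (T : Finset α) (u : α → ℝ) (l : ℝ)
    (hu : Function.Injective u) {a b : ℝ} (hab : a ≤ b)
    (ha : ∀ f ∈ T, u f ≠ a ∧ u f + l ≠ a)
    (hJ : ∀ f ∈ T, u f ∉ Set.Ioo a b ∧ u f + l ∉ Set.Ioo a b) :
    gcount T u l a ≤ gcount T u l b ∧ gcount T u l b ≤ gcount T u l a + 1 := by
  unfold gcount
  constructor
  · apply Finset.card_le_card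
    intro f hf
    simp only [Finset.mem_filter] at hf ⊢
    obtain ⟨hT, h1, h2⟩ := hf
    refine ⟨hT, le_trans h1 hab, ?_⟩
    by_contra hlt
    have h3 : u f + l < b := lt_of_not_ge hlt
    have h4 : a < u f + l := lt_of_le_of_ne h2 (Ne.symm (ha f hT).2)
    exact (hJ f hT).2 ⟨h4, h3⟩
  · have hsub : T.filter (fun f => u f ≤ b ∧ b ≤ u f + l) ⊆
        (T.filter (fun f => u f ≤ a ∧ a ≤ u f + l)) ∪ (T.filter (fun f => u f = b)) := by
      intro f hf
      simp only [Finset.mem_filter, Finset.mem_union] at hf ⊢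
      obtain ⟨hT, h1, h2⟩ := hf
      by_cases hia : u f ≤ a
      · exact Or.inl ⟨hT, hia, le_trans hab h2⟩
      · have h3 : a < u f := lt_of_not_ge hia
        rcases eq_or_lt_of_le h1 with he | he
        · exact Or.inr ⟨hT, he⟩
        · exact absurd ⟨h3, he⟩ (hJ f hT).1
    have h1 : (T.filter (fun f => u f = b)).card ≤ 1 := card_filter_le_one' T u b hu
    have h2 := Finset.card_le_card hsub
    have h3 := Finset.card_union_le (T.filter (fun f => u f ≤ a ∧ a ≤ u f + l))
      (T.filter (fun f => u f = b))
    omega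

private lemma oneD (T : Finset α) (u : α → ℝ) (l : ℝ)
    (hu : Function.Injective u) :
    ∀ (k : ℕ) (a b : ℝ), a ≤ b →
      ((T.image u ∪ T.image (fun f => u f + l)).filter (fun x => x ∈ Set.Ioc a b)).card ≤ k →
      ∀ m : ℕ,
      ((gcount T u l a ≤ m ∧ m ≤ gcount T u l b) ∨
       (gcount T u l b ≤ m ∧ m ≤ gcount T u l a)) →
      ∃ t, a ≤ t ∧ t ≤ b ∧ gcount T u l t = m := by
  have hmemJ : ∀ f ∈ T, u f ∈ T.image u ∪ T.image (fun f => u f + l) ∧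
      u f + l ∈ T.image u ∪ T.image (fun f => u f + l) := by
    intro f hf
    exact ⟨Finset.mem_union_left _ (Finset.mem_image_of_mem u hf),
      Finset.mem_union_right _ (Finset.mem_image_of_mem _ hf)⟩
  intro k
  induction k with
  | zero =>
    intro a b hab hcard m hm
    by_cases hma : gcount T u l a = m
    · exact ⟨a, le_refl a, hab, hma⟩
    by_cases hmb : gcount T u l b = m
    · exact ⟨b, hab, le_refl b, hmb⟩
    exfalso
    have hE : (T.image u ∪ T.image (fun f => u f + l)).filter (fun x => x ∈ Set.Ioc a b) = ∅ :=
      Finset.card_eq_zero.mp (Nat.le_zero.mp hcard)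
    have hJ : ∀ f ∈ T, u f ∉ Set.Ioc a b ∧ u f + l ∉ Set.Ioc a b := by
      intro f hf
      constructor <;> intro hx
      · exact absurd (Finset.mem_filter.mpr ⟨(hmemJ f hf).1, hx⟩) (by rw [hE]; simp)
      · exact absurd (Finset.mem_filter.mpr ⟨(hmemJ f hf).2, hx⟩) (by rw [hE]; simp)
    have ht := trans1 T u l hu hab hJ
    omega
  | succ k ih =>
    intro a b hab hcard m hm
    by_cases hma : gcount T u l a = m
    · exact ⟨a, le_refl a, hab, hma⟩
    by_cases hmb : gcount T u l b = m
    · exact ⟨b, hab, le_refl b, hmb⟩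
    set J := T.image u ∪ T.image (fun f => u f + l) with hJdef
    by_cases hne : (J.filter (fun x => x ∈ Set.Ioc a b)).Nonempty
    case neg =>
      exfalso
      have hE : J.filter (fun x => x ∈ Set.Ioc a b) = ∅ :=
        Finset.not_nonempty_iff_eq_empty.mp hne
      have hJ : ∀ f ∈ T, u f ∉ Set.Ioc a b ∧ u f + l ∉ Set.Ioc a b := by
        intro f hf
        constructor <;> intro hx
        · exact absurd (Finset.mem_filter.mpr ⟨(hmemJ f hf).1, hx⟩) (by rw [hE]; simp)
        · exact absurd (Finset.mem_filter.mpr ⟨(hmemJ f hf).2, hx⟩) (by rw [hE]; simp)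
      have ht := trans1 T u l hu hab hJ
      omega
    case pos =>
      set E := J.filter (fun x => x ∈ Set.Ioc a b) with hEdef
      set e := E.max' hne with hedef
      have heE : e ∈ E := E.max'_mem hne
      have heIoc : e ∈ Set.Ioc a b := (Finset.mem_filter.mp heE).2
      set E2 := J.filter (fun x => x ∈ Set.Ioo a e) with hE2def
      have hc : ∃ c, a ≤ c ∧ c < e ∧ ∀ x ∈ J, x ∈ Set.Ioo a e → x ≤ c := by
        by_cases h2 : E2.Nonempty
        · refine ⟨E2.max' h2, ?_, ?_, ?_⟩
          · have hmem := E2.max'_mem h2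
            simp only [hE2def, Finset.mem_filter] at hmem
            exact le_of_lt hmem.2.1
          · have hmem := E2.max'_mem h2
            simp only [hE2def, Finset.mem_filter] at hmem
            exact hmem.2.2
          · exact fun x hx hIoo => Finset.le_max' _ x (Finset.mem_filter.mpr ⟨hx, hIoo⟩)
        · refine ⟨a, le_refl a, heIoc.1, ?_⟩
          intro x hx hIoo
          exact absurd ⟨x, Finset.mem_filter.mpr ⟨hx, hIoo⟩⟩ h2
      obtain ⟨c, hac, hce, hcmax⟩ := hc
      set t2 := (c + e) / 2 with ht2def
      have hct2 : c < t2 := by rw [ht2def]; linarith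
      have ht2e : t2 < e := by rw [ht2def]; linarith
      have hat2 : a < t2 := lt_of_le_of_lt hac hct2
      have hJt2 : ∀ x ∈ J, x ∉ Set.Ioo t2 e ∧ x ≠ t2 := by
        intro x hx
        constructor
        · intro h
          have := hcmax x hx ⟨lt_trans hat2 h.1, h.2⟩
          linarith [h.1]
        · intro h
          have := hcmax x hx (h ▸ ⟨hat2, ht2e⟩)
          linarith
      have h23 := trans2 T u l hu (le_of_lt ht2e)
        (fun f hf => ⟨(hJt2 _ ((hmemJ f hf).1)).2, (hJt2 _ ((hmemJ f hf).2)).2⟩)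
        (fun f hf => ⟨(hJt2 _ ((hmemJ f hf).1)).1, (hJt2 _ ((hmemJ f hf).2)).1⟩)
      have heb := trans1 T u l hu heIoc.2 (by
        intro f hf
        constructor <;> intro hx
        · have hxE : u f ∈ E := Finset.mem_filter.mpr
            ⟨(hmemJ f hf).1, ⟨lt_trans heIoc.1 hx.1, hx.2⟩⟩
          exact absurd (Finset.le_max' E _ hxE) (not_le.mpr hx.1)
        · have hxE : u f + l ∈ E := Finset.mem_filter.mpr
            ⟨(hmemJ f hf).2, ⟨lt_trans heIoc.1 hx.1, hx.2⟩⟩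
          exact absurd (Finset.le_max' E _ hxE) (not_le.mpr hx.1))
      by_cases hge : gcount T u l e = m
      · exact ⟨e, le_of_lt heIoc.1, heIoc.2, hge⟩
      have hcard2 : (J.filter (fun x => x ∈ Set.Ioc a t2)).card ≤ k := by
        have hsub : J.filter (fun x => x ∈ Set.Ioc a t2) ⊆ E.erase e := by
          intro x hx
          rw [Finset.mem_filter] at hx
          refine Finset.mem_erase.mpr ⟨ne_of_lt (lt_of_le_of_lt hx.2.2 ht2e), ?_⟩
          exact Finset.mem_filter.mpr ⟨hx.1,
            ⟨hx.2.1, le_trans hx.2.2 (le_trans (le_of_lt ht2e) heIoc.2)⟩⟩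
        have h4 := Finset.card_le_card hsub
        have h5 := Finset.card_erase_of_mem heE
        omega
      obtain ⟨t, h1t, h2t, h3t⟩ := ih a t2 (le_of_lt hat2) hcard2 m (by omega)
      exact ⟨t, h1t, le_trans h2t (le_trans (le_of_lt ht2e) heIoc.2), h3t⟩

end OneD



private lemma tsum_indicator_ncard {β : Type*} (s : Set β) (hs : s.Finite) :
    ∑' a : β, s.indicator (fun _ => (1 : ENNReal)) a = s.ncard := by
  classical
  rw [tsum_eq_sum (s := hs.toFinset)
    (fun a ha => Set.indicator_of_notMem (fun h => ha (hs.mem_toFinset.mpr h)) _)]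
  rw [Set.ncard_eq_toFinset_card s hs]
  rw [Finset.card_eq_sum_ones]
  push_cast
  refine Finset.sum_congr rfl (fun a ha => ?_)
  rw [Set.indicator_of_mem (hs.mem_toFinset.mp ha)]

private lemma finite_int_box {p : ℕ} (B : Fin p → ℝ) :
    {f : Fin p → ℤ | ∀ i, |(f i : ℝ)| ≤ B i}.Finite := by
  have hsub : {f : Fin p → ℤ | ∀ i, |(f i : ℝ)| ≤ B i} ⊆
      Set.pi Set.univ (fun i => {m : ℤ | |(m : ℝ)| ≤ B i}) := fun f hf i _ => hf i
  refine Set.Finite.subset (Set.Finite.pi (fun i => ?_)) hsub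
  refine Set.Finite.subset (Set.finite_Icc (-(⌈B i⌉)) ⌈B i⌉) ?_
  intro m hm
  simp only [Set.mem_setOf_eq, abs_le] at hm
  constructor
  · have h1 : (-(⌈B i⌉) : ℝ) ≤ (m : ℝ) := by
      have h0 := Int.le_ceil (B i)
      linarith [hm.1]
    exact_mod_cast h1
  · have h1 : (m : ℝ) ≤ (⌈B i⌉ : ℝ) := le_trans hm.2 (Int.le_ceil _)
    exact_mod_cast h1


set_option maxHeartbeats 2000000 in
theorem exists_translation_with_n_points
    (p n : ℕ) (hp : 1 ≤ p) (hn : 1 ≤ n)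
    (G R : Matrix (Fin p) (Fin p) ℝ) (hG : IsUnit G.det) (hR : Rᵀ * R = 1)
    (hproj : ∀ f : Fin p → ℤ, f ≠ 0 → ∀ j,
      (Rᵀ * Gᵀ).mulVec (fun i => (f i : ℝ)) j ≠ 0)
    (l : ℝ) (hl : 0 < l) (hln : l ^ p = (n : ℝ) * |G.det|) :
    ∃ δ : Fin p → ℝ,
      (∀ f : Fin p → ℤ,
        Real.sqrt (∑ k, δ k ^ 2) ≤
          Real.sqrt (∑ k, (δ k - (Rᵀ * Gᵀ).mulVec (fun i => (f i : ℝ)) k) ^ 2)) ∧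
      Set.ncard {x : Fin p → ℝ |
        (∃ f : Fin p → ℤ, x = (Rᵀ * Gᵀ).mulVec (fun i => (f i : ℝ))) ∧
        ∀ k, x k + δ k ∈ Set.Icc (-(l / 2)) (l / 2)} = n := by
  classical
  set A := Rᵀ * Gᵀ with hAdef
  set Lv : (Fin p → ℤ) → (Fin p → ℝ) := fun f => A.mulVec (fun i => (f i : ℝ)) with hLvdef
  -- determinant facts
  have hdetR2 : R.det * R.det = 1 := by
    have := congrArg Matrix.det hR
    rwa [Matrix.det_mul, Matrix.det_transpose, Matrix.det_one] at this
  have hdetRunit : IsUnit R.det := IsUnit.of_mul_eq_one _ hdetR2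
  have hdetA : A.det = R.det * G.det := by
    rw [hAdef, Matrix.det_mul, Matrix.det_transpose, Matrix.det_transpose]
  have hAunit : IsUnit A.det := by rw [hdetA]; exact hdetRunit.mul hG
  have habsR : |R.det| = 1 := by
    rcases abs_choice R.det with h | h <;> nlinarith [abs_nonneg R.det]
  have habsA : |A.det| = |G.det| := by rw [hdetA, abs_mul, habsR, one_mul]
  have hGpos : 0 < |G.det| := by
    rcases eq_or_ne G.det 0 with h | h
    · exact absurd h (IsUnit.ne_zero hG)
    · exact abs_pos.mpr h
  -- linearity of Lv
  have hLvadd : ∀ f g : Fin p → ℤ, Lv (f + g) = Lv f + Lv g := by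
    intro f g
    show A.mulVec (fun i => ((f i + g i : ℤ) : ℝ)) = _
    have h1 : (fun i => ((f i + g i : ℤ) : ℝ))
        = (fun i => (f i : ℝ)) + (fun i => (g i : ℝ)) := by
      funext i; push_cast; rfl
    rw [h1, Matrix.mulVec_add]
  have hLvsub : ∀ f g : Fin p → ℤ, Lv (f - g) = Lv f - Lv g := by
    intro f g
    show A.mulVec (fun i => ((f i - g i : ℤ) : ℝ)) = _
    have h1 : (fun i => ((f i - g i : ℤ) : ℝ))
        = (fun i => (f i : ℝ)) - (fun i => (g i : ℝ)) := by
      funext i; push_cast; rfl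
    rw [h1, Matrix.mulVec_sub]
  have hLvzero : Lv 0 = 0 := by
    show A.mulVec (fun i => ((0 : ℤ) : ℝ)) = 0
    have h1 : (fun _ : Fin p => ((0 : ℤ) : ℝ)) = (0 : Fin p → ℝ) := by funext i; simp
    rw [h1, Matrix.mulVec_zero]
  have hLvneg : ∀ f : Fin p → ℤ, Lv (-f) = -Lv f := by
    intro f
    have h2 := hLvsub 0 f
    rw [hLvzero, zero_sub, zero_sub] at h2
    exact h2
  have hLvcoord : ∀ (j : Fin p) (f g : Fin p → ℤ), Lv f j = Lv g j → f = g := by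
    intro j f g h
    by_contra hne
    refine hproj (f - g) (sub_ne_zero.mpr hne) j ?_
    have h2 : Lv (f - g) j = 0 := by rw [hLvsub]; simp [h]
    exact h2
  have hLvinj : Function.Injective Lv := fun f g h =>
    hLvcoord ⟨0, hp⟩ f g (congrFun h _)
  -- finiteness of lattice points in boxes
  have hrec : ∀ (f : Fin p → ℤ) (i : Fin p), (f i : ℝ) = ∑ k, A⁻¹ i k * Lv f k := by
    intro f i
    have h1 : A⁻¹.mulVec (Lv f) = (fun i => (f i : ℝ)) := by
      rw [hLvdef]
      dsimp only
      rw [Matrix.mulVec_mulVec, Matrix.nonsing_inv_mul A hAunit, Matrix.one_mulVec]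
    have := congrFun h1 i
    rw [← this]
    rfl
  have hbox : ∀ lo hi : Fin p → ℝ,
      {f : Fin p → ℤ | ∀ k, Lv f k ∈ Set.Icc (lo k) (hi k)}.Finite := by
    intro lo hi
    refine Set.Finite.subset
      (finite_int_box (fun i => ∑ k, |A⁻¹ i k| * max |lo k| |hi k|)) ?_
    intro f hf i
    show |(f i : ℝ)| ≤ _
    rw [hrec f i]
    refine le_trans (Finset.abs_sum_le_sum_abs _ _) (Finset.sum_le_sum ?_)
    intro k _
    rw [abs_mul]
    refine mul_le_mul_of_nonneg_left ?_ (abs_nonneg _)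
    have h3 := (hf k).1
    have h4 := (hf k).2
    rw [abs_le]
    constructor
    · have : -(max |lo k| |hi k|) ≤ -|lo k| := by simp [le_max_left]
      have h5 : -|lo k| ≤ lo k := neg_abs_le _
      linarith
    · have h5 : hi k ≤ |hi k| := le_abs_self _
      have : |hi k| ≤ max |lo k| |hi k| := le_max_right _ _
      linarith
  -- the counting function
  set S : (Fin p → ℝ) → Set (Fin p → ℤ) :=
    fun δ => {f | ∀ k, Lv f k + δ k ∈ Set.Icc (-(l/2)) (l/2)} with hSdef
  have hSfin : ∀ δ, (S δ).Finite := by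
    intro δ
    refine Set.Finite.subset (hbox (fun k => -(l/2) - δ k) (fun k => l/2 - δ k)) ?_
    intro f hf k
    have := hf k
    simp only [Set.mem_Icc] at this ⊢
    constructor <;> linarith [this.1, this.2]
  set N : (Fin p → ℝ) → ℕ := fun δ => (S δ).ncard with hNdef
  -- lattice basis
  have hi : Invertible A := A.invertibleOfIsUnitDet hAunit
  set b : Module.Basis (Fin p) ℝ (Fin p → ℝ) :=
    (Pi.basisFun ℝ (Fin p)).map (Matrix.toLinearEquiv' A hi) with hbdef
  have hbi : ∀ i, b i = A.mulVec (Pi.single i 1) := by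
    intro i; simp [hbdef, Matrix.toLinearEquiv']
  have hbsum : ∀ f : Fin p → ℤ, Lv f = ∑ i, (f i : ℝ) • b i := by
    intro f
    have h1 : (fun i => (f i : ℝ)) = ∑ i, (f i : ℝ) • (Pi.single i 1 : Fin p → ℝ) := by
      funext j
      rw [Finset.sum_apply]
      simp [Pi.single_apply]
    show A.mulVec _ = _
    calc A.mulVec (fun i => (f i : ℝ))
        = A.mulVecLin (∑ i, (f i:ℝ) • (Pi.single i 1 : Fin p → ℝ)) := by rw [← h1, Matrix.mulVecLin_apply]
      _ = ∑ i, (f i:ℝ) • A.mulVecLin ((Pi.single i 1 : Fin p → ℝ)) := by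
          rw [map_sum]
          exact Finset.sum_congr rfl fun i _ => map_smul _ _ _
      _ = ∑ i, (f i:ℝ) • b i := by
          refine Finset.sum_congr rfl fun i _ => ?_
          rw [hbi i, Matrix.mulVecLin_apply]
  have hmemspan : ∀ f : Fin p → ℤ, Lv f ∈ Submodule.span ℤ (Set.range ⇑b) := by
    intro f
    rw [hbsum f]
    refine Submodule.sum_mem _ (fun i _ => ?_)
    have h2 : (f i : ℝ) • b i = f i • b i := by rw [Int.cast_smul_eq_zsmul]
    rw [h2]
    exact Submodule.smul_mem _ _ (Submodule.subset_span ⟨i, rfl⟩)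
  have hspanmem : ∀ x : Fin p → ℝ, x ∈ Submodule.span ℤ (Set.range ⇑b) → ∃ f, x = Lv f := by
    intro x hx
    rw [b.mem_span_iff_repr_mem ℤ] at hx
    choose f hf using hx
    refine ⟨f, ?_⟩
    rw [hbsum f]
    conv_lhs => rw [← b.sum_repr x]
    refine Finset.sum_congr rfl (fun i _ => ?_)
    rw [← hf i]
    norm_num
  set Λ := (Submodule.span ℤ (Set.range ⇑b)).toAddSubgroup with hΛdef
  have hmemΛ : ∀ f : Fin p → ℤ, Lv f ∈ Λ := fun f => hmemspan f
  have heqv : ∃ eqv : (Fin p → ℤ) ≃ Λ, ∀ f, (eqv f : Fin p → ℝ) = Lv (-f) := by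
    refine ⟨Equiv.ofBijective (fun f => (⟨Lv (-f), hmemΛ (-f)⟩ : Λ)) ⟨?_, ?_⟩, fun f => rfl⟩
    · intro f g h
      rw [Subtype.mk.injEq] at h
      have := hLvinj h
      simpa using this
    · rintro ⟨y, hy⟩
      obtain ⟨f, rfl⟩ := hspanmem y hy
      exact ⟨-f, by simp⟩
  obtain ⟨eqv, heqvc⟩ := heqv
  have : Countable Λ := Countable.of_equiv _ eqv
  set cube : Set (Fin p → ℝ) := Set.pi Set.univ (fun _ => Set.Icc (-(l/2)) (l/2)) with hcubedef
  set Cf : (Fin p → ℤ) → Set (Fin p → ℝ) :=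
    fun f => Set.pi Set.univ (fun k => Set.Icc (-(l/2) - Lv f k) (l/2 - Lv f k)) with hCfdef
  have hCfmem : ∀ (f : Fin p → ℤ) δ, δ ∈ Cf f ↔ f ∈ S δ := by
    intro f δ
    simp only [hCfdef, hSdef, Set.mem_pi, Set.mem_univ, Set.mem_Icc, Set.mem_setOf_eq,
      forall_const]
    constructor <;> intro h k <;> have h3 := h k <;> constructor <;> linarith [h3.1, h3.2]
  have hCfmeas : ∀ f, MeasurableSet (Cf f) :=
    fun f => MeasurableSet.pi Set.countable_univ (fun k _ => measurableSet_Icc)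
  set F := ZSpan.fundamentalDomain b with hFdef
  have hFmeas : MeasurableSet F := ZSpan.fundamentalDomain_measurableSet b
  have hvadd : ∀ f : Fin p → ℤ, (Lv (-f)) +ᵥ cube = Cf f := by
    intro f
    ext y
    rw [Set.mem_vadd_set_iff_neg_vadd_mem, ← hLvneg]
    simp only [neg_neg]
    show Lv f + y ∈ cube ↔ _
    simp only [hcubedef, hCfdef, Set.mem_pi, Set.mem_univ, Set.mem_Icc, forall_const,
      Pi.add_apply]
    constructor <;> intro h k <;> have h3 := h k <;> constructor <;> linarith [h3.1, h3.2]
  have hkey : volume cube = ∑' f : Fin p → ℤ, volume (Cf f ∩ F) := by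
    rw [(ZSpan.isAddFundamentalDomain' b volume).measure_eq_tsum cube, ← Equiv.tsum_eq eqv]
    refine tsum_congr (fun f => ?_)
    congr 1
    rw [← hvadd f, ← heqvc f]
    rfl
  have hvolF : volume F = ENNReal.ofReal |G.det| := by
    rw [hFdef, ZSpan.volume_fundamentalDomain]
    congr 1
    have h4 : (Matrix.of ⇑b) = Aᵀ := by
      ext i j
      show b i j = Aᵀ i j
      rw [hbi i, Matrix.transpose_apply]
      simp [Matrix.mulVec_single]
    rw [h4, Matrix.det_transpose, habsA]
  have hvolcube : volume cube = (n : ENNReal) * ENNReal.ofReal |G.det| := by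
    rw [hcubedef, volume_pi_pi]
    simp only [Real.volume_Icc]
    rw [Finset.prod_const, Finset.card_univ, Fintype.card_fin]
    have h1 : l / 2 - -(l / 2) = l := by ring
    rw [h1, ← ENNReal.ofReal_pow hl.le, hln, ENNReal.ofReal_mul (by positivity),
      ENNReal.ofReal_natCast]
  set Ψ : (Fin p → ℝ) → ENNReal :=
    fun δ => ∑' f : Fin p → ℤ, (Cf f ∩ F).indicator (fun _ => 1) δ with hΨdef
  have hΨmeas : Measurable Ψ :=
    Measurable.ennreal_tsum (fun f => measurable_const.indicator ((hCfmeas f).inter hFmeas))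
  have hΨint : ∫⁻ δ, Ψ δ = ∑' f : Fin p → ℤ, volume (Cf f ∩ F) := by
    rw [lintegral_tsum
      (fun f => (measurable_const.indicator ((hCfmeas f).inter hFmeas)).aemeasurable)]
    refine tsum_congr fun f => ?_
    rw [lintegral_indicator_const ((hCfmeas f).inter hFmeas), one_mul]
  have hΨF : ∀ δ, δ ∈ F → Ψ δ = N δ := by
    intro δ hδ
    have h1 : ∀ f : Fin p → ℤ, (Cf f ∩ F).indicator (fun _ => (1:ENNReal)) δ
        = (S δ).indicator (fun _ => 1) f := by
      intro f
      by_cases hf : f ∈ S δ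
      · rw [Set.indicator_of_mem hf, Set.indicator_of_mem (Set.mem_inter ((hCfmem f δ).mpr hf) hδ)]
      · rw [Set.indicator_of_notMem hf,
          Set.indicator_of_notMem (fun hc => hf ((hCfmem f δ).mp hc.1))]
    rw [hΨdef]
    dsimp only
    rw [tsum_congr h1, tsum_indicator_ncard _ (hSfin δ)]
  have hΨ0 : ∀ δ, δ ∉ F → Ψ δ = 0 := by
    intro δ hδ
    rw [hΨdef]
    dsimp only
    rw [tsum_congr (fun f => Set.indicator_of_notMem (fun hc => hδ hc.2) _), tsum_zero]
  have hFne0 : volume F ≠ 0 := by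
    rw [hvolF]
    simp only [ne_eq, ENNReal.ofReal_eq_zero, not_le]
    exact hGpos
  have hFnetop : volume F ≠ ⊤ := by rw [hvolF]; exact ENNReal.ofReal_ne_top
  have hcubene : volume cube ≠ ⊤ := by
    rw [hvolcube]
    exact ENNReal.mul_ne_top (ENNReal.natCast_ne_top n) ENNReal.ofReal_ne_top
  have hlow : ∃ δ, N δ ≤ n := by
    by_contra hcon
    push_neg at hcon
    have hpt : ∀ δ, F.indicator (fun _ => ((n:ENNReal) + 1)) δ ≤ Ψ δ := by
      intro δ
      by_cases hδ : δ ∈ F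
      · rw [Set.indicator_of_mem hδ, hΨF δ hδ]
        have h5 : n + 1 ≤ N δ := hcon δ
        calc (n : ENNReal) + 1 = ((n + 1 : ℕ) : ENNReal) := by push_cast; ring
          _ ≤ N δ := Nat.cast_le.mpr h5
      · rw [Set.indicator_of_notMem hδ]; exact zero_le
    have h2 : ((n:ENNReal)+1) * volume F ≤ (n : ENNReal) * volume F := by
      calc ((n:ENNReal)+1) * volume F
          = ∫⁻ δ, F.indicator (fun _ => ((n:ENNReal) + 1)) δ := by
            rw [lintegral_indicator_const hFmeas]
        _ ≤ ∫⁻ δ, Ψ δ := lintegral_mono hpt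
        _ = volume cube := by rw [hΨint, ← hkey]
        _ = _ := by rw [hvolcube, hvolF]
    have h4 := (ENNReal.mul_le_mul_iff_left hFne0 hFnetop).mp h2
    have h3 : (n:ENNReal) < (n:ENNReal) + 1 :=
      ENNReal.lt_add_right (ENNReal.natCast_ne_top n) one_ne_zero
    exact absurd h4 (not_le.mpr h3)
  have hhigh : ∃ δ, n ≤ N δ := by
    by_contra hcon
    push_neg at hcon
    have hpt : ∀ δ, Ψ δ + F.indicator (fun _ => (1:ENNReal)) δ
        ≤ F.indicator (fun _ => (n:ENNReal)) δ := by
      intro δ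
      by_cases hδ : δ ∈ F
      · rw [Set.indicator_of_mem hδ, Set.indicator_of_mem hδ, hΨF δ hδ]
        have h5 : N δ + 1 ≤ n := hcon δ
        calc (N δ : ENNReal) + 1 = ((N δ + 1 : ℕ) : ENNReal) := by push_cast; ring
          _ ≤ n := Nat.cast_le.mpr h5
      · rw [Set.indicator_of_notMem hδ, Set.indicator_of_notMem hδ, hΨ0 δ hδ]; simp
    have h2 : volume cube + volume F ≤ volume cube := by
      calc volume cube + volume F
          = (∫⁻ δ, Ψ δ) + ∫⁻ δ, F.indicator (fun _ => (1:ENNReal)) δ := by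
            rw [hΨint, ← hkey, lintegral_indicator_const hFmeas, one_mul]
        _ = ∫⁻ δ, (Ψ δ + F.indicator (fun _ => (1:ENNReal)) δ) :=
            (lintegral_add_left hΨmeas _).symm
        _ ≤ ∫⁻ δ, F.indicator (fun _ => (n:ENNReal)) δ := lintegral_mono hpt
        _ = (n : ENNReal) * volume F := by rw [lintegral_indicator_const hFmeas]
        _ = volume cube := by rw [hvolcube, hvolF]
    have h3 := ENNReal.lt_add_right hcubene hFne0
    exact absurd h2 (not_le.mpr h3)
  obtain ⟨δlo, hδlo⟩ := hlow
  obtain ⟨δhi, hδhi⟩ := hhigh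
  -- one-coordinate step: no value skipping
  have hstep : ∀ (δ δ' : Fin p → ℝ) (j : Fin p), (∀ k, k ≠ j → δ k = δ' k) →
      ((N δ ≤ n ∧ n ≤ N δ') ∨ (N δ' ≤ n ∧ n ≤ N δ)) → ∃ δ'', N δ'' = n := by
    intro δ δ' j hsame hm
    set a := min (δ j) (δ' j) with hadef
    set bb := max (δ j) (δ' j) with hbbdef
    set Tset : Set (Fin p → ℤ) := {f | (∀ k, k ≠ j → Lv f k + δ k ∈ Set.Icc (-(l/2)) (l/2)) ∧
      -(l/2) - bb ≤ Lv f j ∧ Lv f j ≤ l/2 - a} with hTdef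
    have hTfin : Tset.Finite := by
      refine Set.Finite.subset (hbox (fun k => if k = j then -(l/2) - bb else -(l/2) - δ k)
        (fun k => if k = j then l/2 - a else l/2 - δ k)) ?_
      intro f hf
      intro k
      by_cases hk : k = j
      · subst hk
        simp only [if_pos rfl, Set.mem_Icc]
        exact ⟨hf.2.1, hf.2.2⟩
      · have h3 := hf.1 k hk
        simp only [if_neg hk, Set.mem_Icc] at h3 ⊢
        constructor <;> linarith [h3.1, h3.2]
    set T : Finset (Fin p → ℤ) := hTfin.toFinset with hTF
    set u : (Fin p → ℤ) → ℝ := fun f => -(l/2) - Lv f j with hudef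
    have huinj : Function.Injective u := by
      intro f g h
      apply hLvcoord j f g
      simp only [hudef] at h
      linarith
    have hSfilt : ∀ s : ℝ, a ≤ s → s ≤ bb →
        S (Function.update δ j s) = ↑(T.filter (fun f => u f ≤ s ∧ s ≤ u f + l)) := by
      intro s h1 h2
      ext f
      simp only [hSdef, Set.mem_setOf_eq, Finset.coe_filter, hTF, Set.Finite.mem_toFinset,
        hTdef, hudef]
      constructor
      · intro h
        have hj := h j
        rw [Function.update_self, Set.mem_Icc] at hj
        refine ⟨⟨fun k hk => ?_, ?_, ?_⟩, ?_, ?_⟩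
        · have h4 := h k
          rwa [Function.update_of_ne hk] at h4
        · linarith [hj.1]
        · linarith [hj.2]
        · linarith [hj.1]
        · linarith [hj.2]
      · rintro ⟨⟨hoff, hb1, hb2⟩, hu1, hu2⟩ k
        by_cases hk : k = j
        · subst hk
          rw [Function.update_self, Set.mem_Icc]
          constructor <;> linarith
        · rw [Function.update_of_ne hk]
          exact hoff k hk
    have hNg : ∀ s : ℝ, a ≤ s → s ≤ bb →
        N (Function.update δ j s) = gcount T u l s := by
      intro s h1 h2
      show (S (Function.update δ j s)).ncard = _
      rw [hSfilt s h1 h2, Set.ncard_coe_finset]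
      rfl
    have hupa : Function.update δ j (δ j) = δ := Function.update_eq_self j δ
    have hupb : Function.update δ j (δ' j) = δ' := by
      funext k
      by_cases hk : k = j
      · subst hk; rw [Function.update_self]
      · rw [Function.update_of_ne hk]; exact hsame k hk
    have hor := oneD T u l huinj
      (((T.image u ∪ T.image (fun f => u f + l)).filter (fun x => x ∈ Set.Ioc a bb)).card)
      a bb min_le_max le_rfl n ?_
    · obtain ⟨t, ht1, ht2, ht3⟩ := hor
      refine ⟨Function.update δ j t, ?_⟩
      rw [hNg t ht1 ht2]
      exact ht3
    · have hga : gcount T u l a = N (Function.update δ j a) := (hNg a le_rfl min_le_max).symm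
      have hgb : gcount T u l bb = N (Function.update δ j bb) := (hNg bb min_le_max le_rfl).symm
      rcases le_total (δ j) (δ' j) with hor2 | hor2
      · have ha' : a = δ j := min_eq_left hor2
        have hb' : bb = δ' j := max_eq_right hor2
        rw [hga, hgb, ha', hb', hupa, hupb]
        exact hm
      · have ha' : a = δ' j := min_eq_right hor2
        have hb' : bb = δ j := max_eq_left hor2
        rw [hga, hgb, ha', hb', hupa, hupb]
        tauto
  -- walk from δlo to δhi one coordinate at a time
  have hexist : ∃ δ, N δ = n := by
    set seq : ℕ → (Fin p → ℝ) := fun i k => if (k : ℕ) < i then δhi k else δlo k with hseqdef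
    have hseq0 : seq 0 = δlo := by funext k; simp [hseqdef]
    have hseqp : seq p = δhi := by funext k; simp [hseqdef, k.isLt]
    have hex : ∃ i, i ≤ p ∧ n ≤ N (seq i) := ⟨p, le_rfl, by rw [hseqp]; exact hδhi⟩
    set i0 := Nat.find hex with hi0def
    have hspec := Nat.find_spec hex
    rcases Nat.eq_zero_or_eq_succ_pred i0 with h0 | h0
    · refine ⟨δlo, le_antisymm hδlo ?_⟩
      rw [← hseq0]
      have := hspec.2
      rwa [← hi0def, h0] at this
    · set i1 := i0 - 1 with hi1def
      have hi01 : i0 = i1 + 1 := h0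
      have hip : i1 < p := by
        have := hspec.1
        omega
      have hmin : ¬ (i1 ≤ p ∧ n ≤ N (seq i1)) := Nat.find_min hex (by omega)
      have hlt : N (seq i1) < n := by
        rcases not_and_or.mp hmin with h | h
        · omega
        · omega
      set jc : Fin p := ⟨i1, hip⟩ with hjcdef
      have hsame : ∀ k, k ≠ jc → seq i1 k = seq (i1 + 1) k := by
        intro k hk
        have hkv : (k : ℕ) ≠ i1 := fun h => hk (Fin.ext h)
        simp only [hseqdef]
        by_cases hltk : (k : ℕ) < i1
        · rw [if_pos hltk, if_pos (by omega)]
        · rw [if_neg hltk, if_neg (by omega)]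
      have hnn : n ≤ N (seq (i1 + 1)) := by
        have := hspec.2
        rwa [← hi0def, hi01] at this
      exact hstep (seq i1) (seq (i1 + 1)) jc hsame (Or.inl ⟨le_of_lt hlt, hnn⟩)
  obtain ⟨δs, hδs⟩ := hexist
  -- move δs into the Voronoi cell of the origin
  set φ : (Fin p → ℤ) → ℝ := fun f => ∑ k, (δs k - Lv f k)^2 with hφdef
  set Q : Set (Fin p → ℤ) := {f | φ f ≤ ∑ k, (δs k)^2} with hQdef
  have hQfin : Q.Finite := by
    refine Set.Finite.subset (hbox (fun k => δs k - Real.sqrt (∑ k, (δs k)^2))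
      (fun k => δs k + Real.sqrt (∑ k, (δs k)^2))) ?_
    intro f hf k
    have h1 : (δs k - Lv f k)^2 ≤ ∑ k, (δs k)^2 := by
      refine le_trans ?_ hf
      exact Finset.single_le_sum (fun k _ => sq_nonneg ((δs k - Lv f k))) (Finset.mem_univ k)
    have h3 : |δs k - Lv f k| ≤ Real.sqrt (∑ k, (δs k)^2) := by
      rw [← Real.sqrt_sq_eq_abs]
      exact Real.sqrt_le_sqrt h1
    rw [abs_le] at h3
    rw [Set.mem_Icc]
    constructor <;> linarith [h3.1, h3.2]
  have hQne : (hQfin.toFinset).Nonempty := by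
    refine ⟨0, ?_⟩
    rw [Set.Finite.mem_toFinset]
    show φ 0 ≤ _
    simp [hφdef, hLvzero]
  obtain ⟨f0, hf0Q, hf0min⟩ := Finset.exists_min_image hQfin.toFinset φ hQne
  set δ : Fin p → ℝ := fun k => δs k - Lv f0 k with hδdef
  have hmain : ∀ f : Fin p → ℤ, ∑ k, (δ k)^2 ≤ ∑ k, (δ k - Lv f k)^2 := by
    intro f
    have h2 : ∑ k, (δ k - Lv f k)^2 = φ (f0 + f) := by
      refine Finset.sum_congr rfl fun k _ => ?_
      have h1 : Lv (f0 + f) k = Lv f0 k + Lv f k := by rw [hLvadd]; rfl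
      have hδk : δ k = δs k - Lv f0 k := rfl
      rw [hδk, h1]
      ring
    have h3 : ∑ k, (δ k)^2 = φ f0 := by
      refine Finset.sum_congr rfl fun k _ => ?_
      rfl
    rw [h2, h3]
    by_cases hmem : (f0 + f) ∈ hQfin.toFinset
    · exact hf0min _ hmem
    · have h4 : ¬ φ (f0 + f) ≤ ∑ k, (δs k)^2 := by
        rw [Set.Finite.mem_toFinset] at hmem
        exact hmem
      have h5 : φ f0 ≤ ∑ k, (δs k)^2 := by
        rw [Set.Finite.mem_toFinset] at hf0Q
        exact hf0Q
      linarith [lt_of_not_ge h4]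
  have hiff : ∀ f : Fin p → ℤ, f ∈ S δ ↔ f - f0 ∈ S δs := by
    intro f
    constructor
    · intro h k
      have h3 := h k
      have hlk : Lv (f - f0) k = Lv f k - Lv f0 k := by rw [hLvsub]; rfl
      have hδk : δ k = δs k - Lv f0 k := rfl
      rw [Set.mem_Icc] at h3 ⊢
      rw [hlk]
      rw [hδk] at h3
      constructor <;> linarith [h3.1, h3.2]
    · intro h k
      have h3 := h k
      have hlk : Lv (f - f0) k = Lv f k - Lv f0 k := by rw [hLvsub]; rfl
      have hδk : δ k = δs k - Lv f0 k := rfl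
      rw [Set.mem_Icc] at h3 ⊢
      rw [hlk] at h3
      rw [hδk]
      constructor <;> linarith [h3.1, h3.2]
  have hset : S δ = (fun g => g + f0) '' (S δs) := by
    ext f
    rw [hiff f]
    constructor
    · intro h
      exact ⟨f - f0, h, sub_add_cancel f f0⟩
    · rintro ⟨g, hg, rfl⟩
      simpa using hg
  have hNδ : N δ = n := by
    show (S δ).ncard = n
    rw [hset, Set.ncard_image_of_injective _ (add_left_injective f0)]
    exact hδs
  refine ⟨δ, ?_, ?_⟩
  · intro f
    exact Real.sqrt_le_sqrt (hmain f)
  · have hgoal : {x : Fin p → ℝ | (∃ f : Fin p → ℤ, x = A.mulVec (fun i => (f i : ℝ))) ∧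
        ∀ k, x k + δ k ∈ Set.Icc (-(l / 2)) (l / 2)} = Lv '' (S δ) := by
      ext x
      simp only [Set.mem_setOf_eq, Set.mem_image]
      constructor
      · rintro ⟨⟨f, rfl⟩, h⟩
        exact ⟨f, h, rfl⟩
      · rintro ⟨f, hf, rfl⟩
        exact ⟨⟨f, rfl⟩, hf⟩
    rw [hgoal, Set.ncard_image_of_injective _ hLvinj]
    exact hNδ
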